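/- Let G = (S, r) be a ranked set with |S| = n and Tutte polynomial T(G; x, y) = ∑ b_{i,j} x^i y^j. Then for all 0 ≤ k < n, ∑_{i=0}^{k} ∑_{j=0}^{k−i} (−1)^j C(k−i, j) b_{i,j} = 0. -/

import Mathlib

open Finset

variable {α : Type*} [DecidableEq α]

/-- The generalized Tutte polynomial of a ranked set (S, r), as a polynomial
in x over polynomials in y; the coefficient b_{i,j} of x^i y^j is
((tutte S r).coeff i).coeff j. -/
noncomputable def tutte (S : Finset α) (r : Finset α → ℤ) : Polynomial (Polynomial ℤ) :=
  ∑ A ∈ S.powerset, (Polynomial.X - 1) ^ (r S - r A).toNat *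
    (Polynomial.C Polynomial.X - 1) ^ ((A.card : ℤ) - r A).toNat

open PowerSeries

noncomputable def U : (PowerSeries ℤ)ˣ :=
  Units.mkOfMulEqOne (1 - X) (mk 1) (Eq.trans (mul_comm _ _) (mk_one_mul_one_sub_eq_one ℤ))

lemma U_val : (U : ℤ⟦X⟧) = 1 - X := rfl

lemma U_zpow_natCast (ρ : ℕ) : ((U ^ (ρ : ℤ) : (PowerSeries ℤ)ˣ) : ℤ⟦X⟧) = (1 - X) ^ ρ := by
  rw [zpow_natCast, Units.val_pow_eq_pow_val, U_val]

lemma U_inv_pow (d : ℕ) : U⁻¹ ^ d = invOneSubPow ℤ d := by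
  rw [invOneSubPow_eq_inv_one_sub_pow]
  rfl

lemma coeff_U_zpow_neg (ν m : ℕ) :
    (coeff m) ((U ^ (-(ν + 1 : ℕ) : ℤ) : (PowerSeries ℤ)ˣ) : ℤ⟦X⟧) = ((ν + m).choose ν : ℤ) := by
  rw [zpow_neg, zpow_natCast, ← inv_pow, U_inv_pow,
    invOneSubPow_val_succ_eq_mk_add_choose, coeff_mk]

lemma coeff_one_sub_X_pow (ρ i : ℕ) :
    (coeff i) ((1 - X : ℤ⟦X⟧) ^ ρ) = (-1) ^ i * (ρ.choose i : ℤ) := by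
  have h : (1 - X : ℤ⟦X⟧) ^ ρ
      = ∑ j ∈ range (ρ + 1), (PowerSeries.C ((-1) ^ j * (ρ.choose j : ℤ))) * X ^ j := by
    rw [sub_eq_add_neg, add_comm, add_pow]
    refine Finset.sum_congr rfl fun j hj => ?_
    rw [neg_pow, one_pow, mul_one]
    push_cast
    rw [map_mul, map_pow, map_neg, map_one, map_natCast]
    ring
  rw [h, map_sum]
  simp only [PowerSeries.coeff_C_mul, coeff_X_pow, mul_ite, mul_one, mul_zero]
  rw [Finset.sum_ite_eq (range (ρ + 1)) i]
  by_cases hi : i ≤ ρ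
  · simp [Nat.lt_succ_iff, hi]
  · simp [Nat.lt_succ_iff, hi, Nat.choose_eq_zero_of_lt (by omega : ρ < i)]

lemma vander_nat (m ν : ℕ) :
    ∑ j ∈ range (ν + 1), m.choose j * ν.choose j = (m + ν).choose ν := by
  rw [Nat.add_choose_eq, Finset.Nat.sum_antidiagonal_eq_sum_range_succ
    (f := fun a b => m.choose a * ν.choose b)]
  exact Finset.sum_congr rfl fun a ha =>
    congrArg _ (Nat.choose_symm (Nat.lt_succ_iff.mp (mem_range.mp ha))).symm

lemma vander_nat' (m ν : ℕ) :
    ∑ j ∈ range (m + 1), m.choose j * ν.choose j = (m + ν).choose ν := by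
  rw [← vander_nat m ν]
  rcases le_total m ν with h | h
  · exact Finset.sum_subset (by simp; omega) (fun j _ hj => by
      simp only [mem_range, Nat.lt_succ_iff, not_le] at hj
      rw [Nat.choose_eq_zero_of_lt hj, zero_mul])
  · exact (Finset.sum_subset (by simp; omega) (fun j _ hj => by
      simp only [mem_range, Nat.lt_succ_iff, not_le] at hj
      rw [Nat.choose_eq_zero_of_lt hj, mul_zero])).symm

lemma vander_int (m ν : ℕ) :
    ∑ j ∈ range (m + 1), ((-1 : ℤ) ^ j * (m.choose j : ℤ)) * ((-1) ^ (ν - j) * (ν.choose j : ℤ))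
      = (-1) ^ ν * ((ν + m).choose ν : ℤ) := by
  have key : ∀ j, ((-1 : ℤ) ^ j * (m.choose j : ℤ)) * ((-1) ^ (ν - j) * (ν.choose j : ℤ))
      = (-1) ^ ν * ((m.choose j * ν.choose j : ℕ) : ℤ) := by
    intro j
    by_cases hj : j ≤ ν
    · have hs : (-1 : ℤ) ^ j * (-1) ^ (ν - j) = (-1) ^ ν := by
        rw [← pow_add]; congr 1; omega
      push_cast
      calc ((-1 : ℤ) ^ j * (m.choose j : ℤ)) * ((-1) ^ (ν - j) * (ν.choose j : ℤ))
          = ((-1 : ℤ) ^ j * (-1) ^ (ν - j)) * ((m.choose j : ℤ) * (ν.choose j : ℤ)) := by ring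
        _ = _ := by rw [hs]
    · rw [Nat.choose_eq_zero_of_lt (by omega : ν < j)]
      push_cast; ring
  rw [Finset.sum_congr rfl fun j _ => key j, ← Finset.mul_sum, ← Nat.cast_sum,
    vander_nat' m ν, Nat.add_comm m ν]

lemma inner_eq (ρ ν k : ℕ) :
    ∑ i ∈ range (k + 1), ∑ j ∈ range (k - i + 1),
        (-1 : ℤ) ^ j * ((k - i).choose j : ℤ) *
          ((-1) ^ (ρ - i) * (ρ.choose i : ℤ) * ((-1) ^ (ν - j) * (ν.choose j : ℤ)))
      = (-1) ^ (ρ + ν) * (coeff k) ((U ^ ((ρ : ℤ) - (ν : ℤ) - 1) : (PowerSeries ℤ)ˣ) : ℤ⟦X⟧) := by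
  have hU : (U ^ ((ρ : ℤ) - (ν : ℤ) - 1) : (PowerSeries ℤ)ˣ)
      = (U ^ (ρ : ℤ)) * (U ^ (-(ν + 1 : ℕ) : ℤ)) := by
    rw [← zpow_add]; congr 1; push_cast; ring
  rw [hU, Units.val_mul, PowerSeries.coeff_mul,
    Finset.Nat.sum_antidiagonal_eq_sum_range_succ
      (f := fun a b => (coeff a) ((U ^ (ρ : ℤ) : (PowerSeries ℤ)ˣ) : ℤ⟦X⟧) *
        (coeff b) ((U ^ (-(ν + 1 : ℕ) : ℤ) : (PowerSeries ℤ)ˣ) : ℤ⟦X⟧)),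
    Finset.mul_sum]
  refine Finset.sum_congr rfl fun i hi => ?_
  have hj : ∑ j ∈ range (k - i + 1),
      (-1 : ℤ) ^ j * ((k - i).choose j : ℤ) *
        ((-1) ^ (ρ - i) * (ρ.choose i : ℤ) * ((-1) ^ (ν - j) * (ν.choose j : ℤ)))
      = ((-1) ^ (ρ - i) * (ρ.choose i : ℤ)) * ((-1) ^ ν * ((ν + (k - i)).choose ν : ℤ)) := by
    rw [← vander_int (k - i) ν, Finset.mul_sum]
    exact Finset.sum_congr rfl fun j _ => by ring
  rw [hj, U_zpow_natCast, coeff_one_sub_X_pow, coeff_U_zpow_neg]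
  by_cases hiρ : i ≤ ρ
  · have h1 : (-1 : ℤ) ^ (ρ - i) * (-1) ^ i = (-1) ^ ρ := by
      rw [← pow_add]; congr 1; omega
    have hii : (-1 : ℤ) ^ i * (-1) ^ i = 1 := by
      rw [← pow_add]; exact Even.neg_one_pow ⟨i, rfl⟩
    rw [pow_add, ← h1]
    linear_combination (-((-1 : ℤ) ^ (ρ - i)) * (ρ.choose i : ℤ) * (-1) ^ ν *
      (((ν + (k - i)).choose ν : ℤ))) * hii
  · rw [Nat.choose_eq_zero_of_lt (by omega : ρ < i)]
    push_cast; ring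

lemma coeff_tutte (S : Finset α) (r : Finset α → ℤ) (i j : ℕ) :
    ((tutte S r).coeff i).coeff j
      = ∑ A ∈ S.powerset,
          (-1 : ℤ) ^ ((r S - r A).toNat - i) * ((r S - r A).toNat.choose i : ℤ) *
          ((-1) ^ (((A.card : ℤ) - r A).toNat - j) *
            ((((A.card : ℤ) - r A).toNat.choose j : ℤ))) := by
  rw [tutte, Polynomial.finset_sum_coeff, Polynomial.finset_sum_coeff]
  refine Finset.sum_congr rfl fun A hA => ?_
  set ρ := (r S - r A).toNat
  set ν := ((A.card : ℤ) - r A).toNat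
  have hC : (Polynomial.C Polynomial.X - 1 : Polynomial (Polynomial ℤ)) ^ ν
      = Polynomial.C ((Polynomial.X - 1 : Polynomial ℤ) ^ ν) := by
    rw [map_pow, map_sub, Polynomial.C_1]
  have hX1 : (Polynomial.X - 1 : Polynomial (Polynomial ℤ))
      = Polynomial.X + Polynomial.C (-1 : Polynomial ℤ) := by
    rw [map_neg, Polynomial.C_1, sub_eq_add_neg]
  have hX2 : (Polynomial.X - 1 : Polynomial ℤ)
      = Polynomial.X + Polynomial.C (-1 : ℤ) := by
    rw [map_neg, Polynomial.C_1, sub_eq_add_neg]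
  rw [hC, Polynomial.coeff_mul_C, hX1, Polynomial.coeff_X_add_C_pow]
  have hconst : ((-1 : Polynomial ℤ) ^ (ρ - i) * (ρ.choose i : Polynomial ℤ))
      = Polynomial.C ((-1 : ℤ) ^ (ρ - i) * (ρ.choose i : ℤ)) := by
    rw [map_mul, map_pow, map_neg, Polynomial.C_1, map_natCast]
  rw [hconst, Polynomial.coeff_C_mul, hX2, Polynomial.coeff_X_add_C_pow]

lemma sum_powerset_card (S : Finset α) (g : ℕ → ℤ) :
    ∑ A ∈ S.powerset, g A.card = ∑ c ∈ range (S.card + 1), (S.card.choose c : ℤ) * g c := by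
  rw [Finset.sum_powerset_apply_card]
  refine Finset.sum_congr rfl fun c hc => ?_
  rw [nsmul_eq_mul]

lemma final (m : ℤ) (n k : ℕ) (hk : k < n) :
    ∑ c ∈ range (n + 1), (n.choose c : ℤ) *
      (((m + c).negOnePow : ℤ) * (coeff k) ((U ^ (m - c - 1) : (PowerSeries ℤ)ˣ) : ℤ⟦X⟧)) = 0 := by
  have hsplit : ∀ c ∈ range (n + 1), ((U ^ (m - c - 1) : (PowerSeries ℤ)ˣ) : ℤ⟦X⟧)
      = ((U ^ (m - n - 1) : (PowerSeries ℤ)ˣ) : ℤ⟦X⟧) * (1 - X) ^ (n - c) := by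
    intro c hc
    rw [← U_zpow_natCast (n - c), ← Units.val_mul, ← zpow_add]
    congr 2
    have hcn : c ≤ n := by simpa [Nat.lt_succ_iff] using hc
    push_cast [hcn]
    ring
  have step1 : ∀ c ∈ range (n + 1),
      (n.choose c : ℤ) * (((m + c).negOnePow : ℤ) *
        (coeff k) ((U ^ (m - c - 1) : (PowerSeries ℤ)ˣ) : ℤ⟦X⟧))
      = (m.negOnePow : ℤ) * (coeff k) (((-1 : ℤ) ^ c * (n.choose c : ℤ)) •
          (((U ^ (m - n - 1) : (PowerSeries ℤ)ˣ) : ℤ⟦X⟧) * (1 - X) ^ (n - c))) := by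
    intro c hc
    rw [hsplit c hc, map_smul, smul_eq_mul, Int.negOnePow_add, Units.val_mul,
      Int.coe_negOnePow_natCast]
    ring
  rw [Finset.sum_congr rfl step1, ← Finset.mul_sum, ← map_sum]
  have hbin : ∑ c ∈ range (n + 1), ((-1 : ℤ) ^ c * (n.choose c : ℤ)) •
      (((U ^ (m - n - 1) : (PowerSeries ℤ)ˣ) : ℤ⟦X⟧) * (1 - X) ^ (n - c))
      = (((-1 : ℤ⟦X⟧) ^ n) * ((U ^ (m - n - 1) : (PowerSeries ℤ)ˣ) : ℤ⟦X⟧)) * X ^ n := by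
    have h2 : ((-1 : ℤ⟦X⟧) + (1 - X)) = -X := by ring
    have h := add_pow (-1 : ℤ⟦X⟧) (1 - X) n
    rw [h2] at h
    calc ∑ c ∈ range (n + 1), ((-1 : ℤ) ^ c * (n.choose c : ℤ)) •
        (((U ^ (m - n - 1) : (PowerSeries ℤ)ˣ) : ℤ⟦X⟧) * (1 - X) ^ (n - c))
        = ((U ^ (m - n - 1) : (PowerSeries ℤ)ˣ) : ℤ⟦X⟧) *
          ∑ c ∈ range (n + 1), (-1 : ℤ⟦X⟧) ^ c * (1 - X) ^ (n - c) * (n.choose c : ℤ⟦X⟧) := by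
          rw [Finset.mul_sum]
          refine Finset.sum_congr rfl fun c hc => ?_
          rw [zsmul_eq_mul]
          push_cast
          ring
      _ = ((U ^ (m - n - 1) : (PowerSeries ℤ)ˣ) : ℤ⟦X⟧) * (-X) ^ n := by rw [← h]
      _ = _ := by rw [neg_pow]; ring
  rw [hbin, PowerSeries.coeff_mul_X_pow', if_neg (by omega : ¬ n ≤ k), mul_zero]

/-- For all 0 ≤ k < n = |S|: ∑_{i=0}^{k} ∑_{j=0}^{k-i} (-1)^j C(k-i,j) b_{i,j} = 0. -/
theorem stmt12 (S : Finset α) (r : Finset α → ℤ)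
    (h0 : r ∅ = 0) (h1 : ∀ A ⊆ S, r A ≤ r S) (h2 : ∀ A ⊆ S, r A ≤ (A.card : ℤ))
    (k : ℕ) (hk : k < S.card) :
    ∑ i ∈ Finset.range (k + 1), ∑ j ∈ Finset.range (k - i + 1),
      (-1 : ℤ) ^ j * ((k - i).choose j : ℤ) * (((tutte S r).coeff i).coeff j) = 0 := by
  calc
    ∑ i ∈ Finset.range (k + 1), ∑ j ∈ Finset.range (k - i + 1),
        (-1 : ℤ) ^ j * ((k - i).choose j : ℤ) * (((tutte S r).coeff i).coeff j)
      = ∑ i ∈ Finset.range (k + 1), ∑ j ∈ Finset.range (k - i + 1), ∑ A ∈ S.powerset,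
          (-1 : ℤ) ^ j * ((k - i).choose j : ℤ) *
            ((-1 : ℤ) ^ ((r S - r A).toNat - i) * ((r S - r A).toNat.choose i : ℤ) *
            ((-1) ^ (((A.card : ℤ) - r A).toNat - j) *
              ((((A.card : ℤ) - r A).toNat.choose j : ℤ)))) := by
        refine Finset.sum_congr rfl fun i _ => Finset.sum_congr rfl fun j _ => ?_
        rw [coeff_tutte, Finset.mul_sum]
    _ = ∑ A ∈ S.powerset, ∑ i ∈ Finset.range (k + 1), ∑ j ∈ Finset.range (k - i + 1),
          (-1 : ℤ) ^ j * ((k - i).choose j : ℤ) *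
            ((-1 : ℤ) ^ ((r S - r A).toNat - i) * ((r S - r A).toNat.choose i : ℤ) *
            ((-1) ^ (((A.card : ℤ) - r A).toNat - j) *
              ((((A.card : ℤ) - r A).toNat.choose j : ℤ)))) := by
        rw [Finset.sum_congr rfl fun i (_ : i ∈ Finset.range (k+1)) => Finset.sum_comm,
          Finset.sum_comm]
    _ = ∑ A ∈ S.powerset, (-1 : ℤ) ^ ((r S - r A).toNat + ((A.card : ℤ) - r A).toNat) *
          (coeff k) ((U ^ (((r S - r A).toNat : ℤ) - (((A.card : ℤ) - r A).toNat : ℤ) - 1) :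
            (PowerSeries ℤ)ˣ) : ℤ⟦X⟧) :=
        Finset.sum_congr rfl fun A _ => inner_eq _ _ k
    _ = ∑ A ∈ S.powerset, ((r S + (A.card : ℤ)).negOnePow : ℤ) *
          (coeff k) ((U ^ (r S - (A.card : ℤ) - 1) : (PowerSeries ℤ)ˣ) : ℤ⟦X⟧) := by
        refine Finset.sum_congr rfl fun A hA => ?_
        have hAS := Finset.mem_powerset.mp hA
        have hρ : (((r S - r A).toNat : ℤ)) = r S - r A :=
          Int.toNat_of_nonneg (by have := h1 A hAS; omega)
        have hν : ((((A.card : ℤ) - r A).toNat : ℤ)) = (A.card : ℤ) - r A :=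
          Int.toNat_of_nonneg (by have := h2 A hAS; omega)
        have hexp : ((r S - r A).toNat : ℤ) - (((A.card : ℤ) - r A).toNat : ℤ) - 1
            = r S - (A.card : ℤ) - 1 := by rw [hρ, hν]; ring
        have hsign : (-1 : ℤ) ^ ((r S - r A).toNat + ((A.card : ℤ) - r A).toNat)
            = ((r S + (A.card : ℤ)).negOnePow : ℤ) := by
          rw [← Int.coe_negOnePow_natCast]
          congr 1
          have hcast : (((r S - r A).toNat + ((A.card : ℤ) - r A).toNat : ℕ) : ℤ)
              = (r S + (A.card : ℤ)) + (-(2 * r A)) := by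
            rw [Nat.cast_add, hρ, hν]; ring
          rw [hcast, Int.negOnePow_add, Int.negOnePow_neg, Int.negOnePow_two_mul, mul_one]
        rw [hexp, hsign]
    _ = ∑ c ∈ Finset.range (S.card + 1), (S.card.choose c : ℤ) *
          (((r S + (c : ℤ)).negOnePow : ℤ) *
            (coeff k) ((U ^ (r S - (c : ℤ) - 1) : (PowerSeries ℤ)ˣ) : ℤ⟦X⟧)) :=
        sum_powerset_card S fun c => ((r S + (c : ℤ)).negOnePow : ℤ) *
          (coeff k) ((U ^ (r S - (c : ℤ) - 1) : (PowerSeries ℤ)ˣ) : ℤ⟦X⟧)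
    _ = 0 := final (r S) S.card k hk
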